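/- For every nonnegative integer n and μ > -1/2, one has p_{2n+1,μ}(1,1) = 2·p_{2n,μ}(1,1), i.e. Σ_{k=0}^{2n+1} C_μ(2n+1,k) = 2·Σ_{k=0}^{2n} C_μ(2n,k). -/

import Mathlib

open Finset

/-- The μ-deformed factorial function γ_μ. -/
noncomputable def gammaMu (μ : ℝ) : ℕ → ℝ
  | 0 => 1
  | n + 1 => ((n + 1 : ℝ) + 2 * μ * (if Odd (n + 1) then 1 else 0)) * gammaMu μ n

/-- The μ-deformed binomial coefficient C_μ(n,k), zero outside 0 ≤ k ≤ n. -/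
noncomputable def binomMu (μ : ℝ) (n : ℕ) (k : ℤ) : ℝ :=
  if 0 ≤ k ∧ k ≤ (n : ℤ) then gammaMu μ n / (gammaMu μ (n - k.toNat) * gammaMu μ k.toNat) else 0

/-- The n-th μ-deformed binomial polynomial p_{n,μ}(x,y). -/
noncomputable def pMu (μ : ℝ) (n : ℕ) (x y : ℂ) : ℂ :=
  ∑ k ∈ Finset.range (n + 1), (binomMu μ n k : ℂ) * x ^ k * y ^ (n - k)

/-- The μ-deformed exponential function. -/
noncomputable def expMu (μ : ℝ) (z : ℂ) : ℂ :=
  ∑' n : ℕ, z ^ n / (gammaMu μ n : ℂ)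

/-- The Bessel function of the first kind of order ν, for positive real argument. -/
noncomputable def besselJ (ν x : ℝ) : ℝ :=
  ∑' m : ℕ, ((-1) ^ m / (Nat.factorial m * Real.Gamma (ν + m + 1))) * (x / 2) ^ ((2 * m : ℝ) + ν)

lemma gammaMu_succ (μ : ℝ) (n : ℕ) :
    gammaMu μ (n+1) = ((n + 1 : ℝ) + 2 * μ * (if Odd (n + 1) then 1 else 0)) * gammaMu μ n := rfl

lemma gammaMu_odd (μ : ℝ) (m : ℕ) :
    gammaMu μ (2*m+1) = ((2*m+1 : ℝ) + 2*μ) * gammaMu μ (2*m) := by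
  have h : Odd (2*m+1) := ⟨m, by ring⟩
  rw [gammaMu_succ, if_pos h]
  push_cast; ring

lemma gammaMu_even (μ : ℝ) (m : ℕ) :
    gammaMu μ (2*m+2) = ((2*m+2 : ℝ)) * gammaMu μ (2*m+1) := by
  have h : ¬ Odd (2*m+2) := by rw [Nat.odd_iff]; omega
  rw [show 2*m+2 = (2*m+1)+1 from rfl, gammaMu_succ, if_neg (by exact_mod_cast h)]
  push_cast; ring

lemma gammaMu_pos (μ : ℝ) (hμ : -(1/2 : ℝ) < μ) (n : ℕ) : 0 < gammaMu μ n := by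
  induction n with
  | zero => norm_num [gammaMu]
  | succ n ih =>
    rw [gammaMu_succ]
    apply mul_pos _ ih
    split
    · have : (n : ℝ) ≥ 0 := Nat.cast_nonneg n
      nlinarith
    · have : (n : ℝ) ≥ 0 := Nat.cast_nonneg n
      nlinarith

lemma binomMu_nat (μ : ℝ) (N j : ℕ) (h : j ≤ N) :
    binomMu μ N (j : ℤ) = gammaMu μ N / (gammaMu μ (N - j) * gammaMu μ j) := by
  rw [binomMu, if_pos ⟨Int.natCast_nonneg j, by exact_mod_cast h⟩, Int.toNat_natCast]

lemma binomMu_gt (μ : ℝ) (N : ℕ) (k : ℤ) (h : (N : ℤ) < k) : binomMu μ N k = 0 := by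
  rw [binomMu, if_neg]; omega

lemma binomMu_neg (μ : ℝ) (N : ℕ) (k : ℤ) (h : k < 0) : binomMu μ N k = 0 := by
  rw [binomMu, if_neg]; omega

lemma pascal (μ : ℝ) (hμ : -(1/2 : ℝ) < μ) (n j : ℕ) (hj : j ≤ 2*n+1) :
    binomMu μ (2*n+1) (j : ℤ) = binomMu μ (2*n) (j : ℤ) + binomMu μ (2*n) ((j : ℤ) - 1) := by
  have hA := gammaMu_pos μ hμ
  rcases Nat.eq_zero_or_pos j with rfl | hj0
  · rw [binomMu_nat μ _ _ (by omega), binomMu_nat μ _ _ (by omega),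
      binomMu_neg μ _ _ (by norm_num)]
    simp only [gammaMu, Nat.sub_zero, mul_one]
    rw [← gammaMu_succ μ (2*n), div_self (hA _).ne', div_self (hA _).ne']
    norm_num
  rcases eq_or_lt_of_le hj with rfl | hjlt
  · have e1 : ((2*n+1 : ℕ) : ℤ) - 1 = ((2*n : ℕ) : ℤ) := by push_cast; ring
    rw [e1, binomMu_nat μ _ _ le_rfl, binomMu_nat μ _ _ le_rfl,
      binomMu_gt μ _ _ (by push_cast; omega)]
    simp only [Nat.sub_self, gammaMu, one_mul]
    rw [← gammaMu_succ μ (2*n), div_self (hA _).ne', div_self (hA _).ne']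
    norm_num
  -- now 1 ≤ j ≤ 2n
  have hj2 : j ≤ 2*n := by omega
  rcases Nat.even_or_odd j with ⟨i, rfl⟩ | ⟨i, rfl⟩
  ·
    obtain ⟨i', rfl⟩ : ∃ i', i = i' + 1 := ⟨i - 1, by omega⟩
    obtain ⟨m, rfl⟩ : ∃ m, n = i' + m + 1 := ⟨n - i' - 1, by omega⟩
    have e1 : ((i' + 1 + (i' + 1) : ℕ) : ℤ) - 1 = ((2*i' + 1 : ℕ) : ℤ) := by push_cast; ring
    rw [e1, binomMu_nat μ _ _ (by omega), binomMu_nat μ _ _ (by omega),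
      binomMu_nat μ _ _ (by omega)]
    have r1 : 2*(i'+m+1)+1 - (i'+1+(i'+1)) = 2*m+1 := by omega
    have r2 : 2*(i'+m+1) - (i'+1+(i'+1)) = 2*m := by omega
    have r3 : 2*(i'+m+1) - (2*i'+1) = 2*m+1 := by omega
    have r4 : i'+1+(i'+1) = 2*i'+2 := by omega
    rw [r1, r2, r3, r4]
    rw [show 2*(i'+m+1)+1 = 2*(i'+m+1)+1 from rfl, gammaMu_odd μ (i'+m+1),
      gammaMu_odd μ m, gammaMu_even μ i']
    have hB := (hA (2*m)).ne'
    have hC := (hA (2*i'+1)).ne'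
    have hD := (hA (2*(i'+m+1))).ne'
    have h1 : (2*(m:ℝ)+1+2*μ) ≠ 0 := by push_cast; nlinarith [Nat.cast_nonneg (α := ℝ) m]
    have h2 : ((2*(i':ℝ)+2) : ℝ) ≠ 0 := by positivity
    field_simp
    push_cast
    ring
  · -- j = 2i+1 ≤ 2n, so i < n
    obtain ⟨m, rfl⟩ : ∃ m, n = i + m + 1 := ⟨n - i - 1, by omega⟩
    have e1 : ((2*i + 1 : ℕ) : ℤ) - 1 = ((2*i : ℕ) : ℤ) := by push_cast; ring
    rw [e1, binomMu_nat μ _ _ (by omega), binomMu_nat μ _ _ (by omega),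
      binomMu_nat μ _ _ (by omega)]
    have r1 : 2*(i+m+1)+1 - (2*i+1) = 2*m+2 := by omega
    have r2 : 2*(i+m+1) - (2*i+1) = 2*m+1 := by omega
    have r3 : 2*(i+m+1) - 2*i = 2*m+2 := by omega
    rw [r1, r2, r3]
    rw [gammaMu_odd μ (i+m+1), gammaMu_even μ m, gammaMu_odd μ i]
    have hB := (hA (2*m+1)).ne'
    have hC := (hA (2*i)).ne'
    have hD := (hA (2*(i+m+1))).ne'
    have h1 : (2*(i:ℝ)+1+2*μ) ≠ 0 := by nlinarith [Nat.cast_nonneg (α := ℝ) i]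
    have h2 : ((2*(m:ℝ)+2) : ℝ) ≠ 0 := by positivity
    field_simp
    push_cast
    ring

lemma sum_pascal (μ : ℝ) (hμ : -(1/2 : ℝ) < μ) (n : ℕ) :
    ∑ k ∈ Finset.range (2*n+1+1), binomMu μ (2*n+1) (k : ℤ)
      = 2 * ∑ k ∈ Finset.range (2*n+1), binomMu μ (2*n) (k : ℤ) := by
  rw [Finset.sum_congr rfl (fun k hk => pascal μ hμ n k (by
    simp only [Finset.mem_range] at hk; omega))]
  rw [Finset.sum_add_distrib]
  have h1 : ∑ k ∈ Finset.range (2*n+1+1), binomMu μ (2*n) (k : ℤ)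
      = ∑ k ∈ Finset.range (2*n+1), binomMu μ (2*n) (k : ℤ) := by
    rw [Finset.sum_range_succ, binomMu_gt μ _ _ (by push_cast; omega), add_zero]
  have h2 : ∑ k ∈ Finset.range (2*n+1+1), binomMu μ (2*n) ((k : ℤ) - 1)
      = ∑ k ∈ Finset.range (2*n+1), binomMu μ (2*n) (k : ℤ) := by
    rw [Finset.sum_range_succ']
    simp only [Nat.cast_add, Nat.cast_one, add_sub_cancel_right]
    rw [binomMu_neg μ _ _ (by norm_num), add_zero]
  rw [h1, h2]; ring

theorem pMu_sum_odd_eq_two_mul (μ : ℝ) (hμ : -(1/2 : ℝ) < μ) (n : ℕ) :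
    pMu μ (2 * n + 1) 1 1 = 2 * pMu μ (2 * n) 1 1 := by
  simp only [pMu, one_pow, mul_one]
  rw [← Complex.ofReal_sum, ← Complex.ofReal_sum, ← Complex.ofReal_ofNat,
    ← Complex.ofReal_mul]
  exact_mod_cast sum_pascal μ hμ n
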